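/- If G and H are finite simple graphs each having at least one edge and the direct product G×H is connected, then G×H is strongly edge-balanced. -/

import Mathlib

open SimpleGraph

/-- The lexicographic product (composition) `G[H]`. -/
def lexProd {α β : Type*} (G : SimpleGraph α) (H : SimpleGraph β) :
    SimpleGraph (α × β) where
  Adj x y := G.Adj x.1 y.1 ∨ (x.1 = y.1 ∧ H.Adj x.2 y.2)
  symm := ⟨fun x y h =>
    h.elim (fun h' => Or.inl h'.symm) (fun ⟨he, h2⟩ => Or.inr ⟨he.symm, h2.symm⟩)⟩
  loopless := ⟨fun x h =>
    h.elim (G.loopless.irrefl x.1) (fun ⟨_, h2⟩ => H.loopless.irrefl x.2 h2)⟩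

/-- The direct (tensor, Kronecker) product `G × H`. -/
def tensorProd {α β : Type*} (G : SimpleGraph α) (H : SimpleGraph β) :
    SimpleGraph (α × β) where
  Adj x y := G.Adj x.1 y.1 ∧ H.Adj x.2 y.2
  symm := ⟨fun _ _ ⟨h1, h2⟩ => ⟨h1.symm, h2.symm⟩⟩
  loopless := ⟨fun x h => G.loopless.irrefl x.1 h.1⟩

/-- The number of edges labeled `i` by the edge labeling `f`. -/
noncomputable def edgeCount {V : Type*} (G : SimpleGraph V) (f : G.edgeSet → ZMod 2) (i : ZMod 2) : ℕ :=
  Nat.card {e : G.edgeSet // f e = i}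

/-- The number of edges incident to `v` that are labeled `i` (the `i`-degree of `v`). -/
noncomputable def labDeg {V : Type*} (G : SimpleGraph V) (f : G.edgeSet → ZMod 2) (i : ZMod 2) (v : V) : ℕ :=
  Nat.card {e : G.edgeSet // f e = i ∧ v ∈ (e : Sym2 V)}

/-- The number of vertices whose induced (partial) label is `i`: those incident to strictly
more `i`-edges than `(1-i)`-edges. -/
noncomputable def vertexCount {V : Type*} (G : SimpleGraph V) (f : G.edgeSet → ZMod 2) (i : ZMod 2) : ℕ :=
  Nat.card {v : V // labDeg G f (1 - i) v < labDeg G f i v}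

/-- An edge labeling (a surjective function onto `ZMod 2`) is edge-friendly if
`|e_f(0) - e_f(1)| ≤ 1`. -/
def EdgeFriendly {V : Type*} (G : SimpleGraph V) (f : G.edgeSet → ZMod 2) : Prop :=
  Function.Surjective f ∧ |(edgeCount G f 0 : ℤ) - (edgeCount G f 1 : ℤ)| ≤ 1

/-- A graph is strongly edge-balanced if some edge-friendly labeling `f` satisfies
`v_f(0) = v_f(1)` and `e_f(0) = e_f(1)`. -/
def StronglyEdgeBalanced {V : Type*} (G : SimpleGraph V) : Prop :=
  ∃ f : G.edgeSet → ZMod 2, EdgeFriendly G f ∧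
    vertexCount G f 0 = vertexCount G f 1 ∧ edgeCount G f 0 = edgeCount G f 1

open Finset

namespace EBaux

noncomputable section
open scoped Classical

variable {ι V : Type*}

def tl (a b : ι → V) (o : ι → Bool) (k : ι) : V := if o k then a k else b k
def hd (a b : ι → V) (o : ι → Bool) (k : ι) : V := if o k then b k else a k

def disc [Fintype ι] (a b : ι → V) (o : ι → Bool) (x : V) : ℤ :=
  ∑ k, ((if tl a b o k = x then (1:ℤ) else 0) - (if hd a b o k = x then 1 else 0))

lemma othep_invol (A B v : V) (h : A = v ∨ B = v) :
    (if A = (if A = v then B else A) then B else A) = v := by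
  by_cases h1 : A = v
  · subst h1
    by_cases h2 : A = B
    · subst h2; simp
    · simp [h2]
  · have h2 : B = v := h.resolve_left h1
    subst h2
    simp [h1]

lemma othep_mem (A B v : V) : A = (if A = v then B else A) ∨ B = (if A = v then B else A) := by
  by_cases h1 : A = v <;> simp [h1]

lemma single' (A B v' x : V) (h : A = v' ∨ B = v') :
    (if (if (decide (A = (if A = v' then B else A)) : Bool) then A else B) = x then (1:ℤ) else 0)
      - (if (if (decide (A = (if A = v' then B else A)) : Bool) then B else A) = x then 1 else 0)
    = (if (if A = v' then B else A) = x then 1 else 0) - (if v' = x then 1 else 0) := by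
  by_cases h1 : A = v'
  · subst h1
    by_cases h2 : A = B
    · subst h2; simp
    · simp [h2, eq_comm]
  · have h2 : B = v' := h.resolve_left h1
    subst h2
    simp [h1]

lemma bal : ∀ (n : ℕ) (ι : Type u) (V : Type v) [Fintype ι] (a b : ι → V),
    Fintype.card ι = n → ∃ o : ι → Bool, ∀ x : V, |disc a b o x| ≤ 1 := by
  intro n
  induction n using Nat.strong_induction_on with
  | _ n IH =>
    intro ι V _ a b hn
    by_cases hshare : ∃ i j : ι, i ≠ j ∧ ∃ v : V, (a i = v ∨ b i = v) ∧ (a j = v ∨ b j = v)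
    · obtain ⟨i, j, hij, v, hiv, hjv⟩ := hshare
      set u : V := if a i = v then b i else a i with hu
      set w : V := if a j = v then b j else a j with hw
      set a' : Option {k : ι // k ≠ i ∧ k ≠ j} → V := fun k => k.elim u (fun k => a k.1) with ha'
      set b' : Option {k : ι // k ≠ i ∧ k ≠ j} → V := fun k => k.elim w (fun k => b k.1) with hb'
      have hcard2 : 2 ≤ n := by
        rw [← hn]
        exact Fintype.one_lt_card_iff.mpr ⟨i, j, hij⟩
      have hcard : Fintype.card (Option {k : ι // k ≠ i ∧ k ≠ j}) = n - 1 := by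
        rw [Fintype.card_option, Fintype.card_subtype]
        have : (univ.filter fun k : ι => k ≠ i ∧ k ≠ j) = (univ.erase j).erase i := by
          ext k; simp
        rw [this, Finset.card_erase_of_mem (by simp [hij]), Finset.card_erase_of_mem (by simp)]
        rw [Finset.card_univ, hn]
        omega
      obtain ⟨o', ho'⟩ := IH (n-1) (by omega) _ V a' b' hcard
      set dir : Bool := o' none with hdir
      clear_value dir
      set o : ι → Bool := fun k =>
        if hki : k = i then
          (if dir then decide (a i = (if a i = v then b i else a i))
           else decide (a i = (if a i = u then b i else a i)))
        else if hkj : k = j then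
          (if dir then decide (a j = (if a j = w then b j else a j))
           else decide (a j = (if a j = v then b j else a j)))
        else o' (some ⟨k, hki, hkj⟩) with ho
      refine ⟨o, fun x => ?_⟩
      have hinvi : (if a i = u then b i else a i) = v := by
        conv_lhs => rw [hu]
        exact othep_invol (a i) (b i) v hiv
      have hinvj : (if a j = w then b j else a j) = v := by
        conv_lhs => rw [hw]
        exact othep_invol (a j) (b j) v hjv
      have hmemi : a i = u ∨ b i = u := by rw [hu]; exact othep_mem (a i) (b i) v
      have hmemj : a j = w ∨ b j = w := by rw [hw]; exact othep_mem (a j) (b j) v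
      have key : disc a b o x = disc a' b' o' x := by
        have hc : ∀ k : {k : ι // k ≠ i ∧ k ≠ j},
            ((if tl a b o k.1 = x then (1:ℤ) else 0) - (if hd a b o k.1 = x then 1 else 0))
            = ((if tl a' b' o' (some k) = x then (1:ℤ) else 0)
                - (if hd a' b' o' (some k) = x then 1 else 0)) := by
          rintro ⟨k, hki, hkj⟩
          simp [tl, hd, ho, ha', hb', dif_neg hki, dif_neg hkj]
        have hsum1 : disc a b o x =
            ((if tl a b o i = x then (1:ℤ) else 0) - (if hd a b o i = x then 1 else 0))
            + ((if tl a b o j = x then (1:ℤ) else 0) - (if hd a b o j = x then 1 else 0))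
            + ∑ k : {k : ι // k ≠ i ∧ k ≠ j},
                ((if tl a b o k.1 = x then (1:ℤ) else 0) - (if hd a b o k.1 = x then 1 else 0)) := by
          rw [disc]
          rw [← Finset.add_sum_erase _ _ (Finset.mem_univ i)]
          rw [← Finset.add_sum_erase _ _ (Finset.mem_erase.mpr ⟨hij.symm, Finset.mem_univ j⟩)]
          rw [Finset.sum_subtype ((univ.erase i).erase j)
            (p := fun k : ι => k ≠ i ∧ k ≠ j) (by intro k; simp [and_comm])]
          ring
        have hsum2 : disc a' b' o' x =
            ((if tl a' b' o' none = x then (1:ℤ) else 0) - (if hd a' b' o' none = x then 1 else 0))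
            + ∑ k : {k : ι // k ≠ i ∧ k ≠ j},
                ((if tl a' b' o' (some k) = x then (1:ℤ) else 0)
                  - (if hd a' b' o' (some k) = x then 1 else 0)) := by
          rw [disc, Fintype.sum_option]
        rw [hsum1, hsum2, Finset.sum_congr rfl (fun k _ => hc k)]
        congr 1
        have hoi : o i = (if dir then decide (a i = (if a i = v then b i else a i))
           else decide (a i = (if a i = u then b i else a i))) := by
          simp only [ho, dite_true]
        have hoj : o j = (if dir then decide (a j = (if a j = w then b j else a j))
           else decide (a j = (if a j = v then b j else a j))) := by
          simp only [ho, dite_true]; rw [dif_neg hij.symm]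
        have htln : tl a' b' o' none = if dir then u else w := by
          rw [tl, ← hdir]
          cases dir <;> simp [ha', hb']
        have hhdn : hd a' b' o' none = if dir then w else u := by
          rw [hd, ← hdir]
          cases dir <;> simp [ha', hb']
        clear_value o u w
        cases hd2 : dir with
        | true =>
          rw [hd2] at hoi hoj htln hhdn
          simp only [if_true] at hoi hoj htln hhdn
          have e1 := single' (a i) (b i) v x hiv
          have e2 := single' (a j) (b j) w x hmemj
          rw [hinvj] at e2 hoj
          rw [← hu] at e1 hoi
          rw [htln, hhdn]
          simp only [tl, hd]
          simp only [hoi, hoj]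
          rw [e1, e2]
          ring
        | false =>
          rw [hd2] at hoi hoj htln hhdn
          simp only [if_false, Bool.false_eq_true] at hoi hoj htln hhdn
          have e1 := single' (a i) (b i) u x hmemi
          have e2 := single' (a j) (b j) v x hjv
          rw [hinvi] at e1 hoi
          rw [← hw] at e2 hoj
          rw [htln, hhdn]
          simp only [tl, hd]
          simp only [hoi, hoj]
          rw [e1, e2]
          ring
      rw [key]; exact ho' x
    · push_neg at hshare
      refine ⟨fun _ => true, fun x => ?_⟩
      by_cases hex : ∃ k, a k = x ∨ b k = x
      · obtain ⟨k0, hk0⟩ := hex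
        rw [disc, Finset.sum_eq_single k0]
        · simp only [tl, hd, if_true]
          split_ifs <;> norm_num
        · intro k _ hkk
          simp only [tl, hd, if_true]
          have : ¬(a k = x ∨ b k = x) := by
            intro hc
            rcases hk0 with h|h
            exacts [(hshare k k0 hkk x hc).1 h, (hshare k k0 hkk x hc).2 h]
          push_neg at this
          simp [this.1, this.2]
        · intro h; exact absurd (Finset.mem_univ k0) h
      · push_neg at hex
        rw [disc]
        have : ∀ k : ι, ((if tl a b (fun _ => true) k = x then (1:ℤ) else 0)
            - (if hd a b (fun _ => true) k = x then 1 else 0)) = 0 := by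
          intro k
          simp [tl, hd, (hex k).1, (hex k).2]
        rw [Finset.sum_congr rfl (fun k _ => this k)]
        simp

section Graph

variable {α : Type*} [Fintype α] (G : SimpleGraph α)

def ea (e : G.edgeSet) : α := (Quot.out (e : Sym2 α)).1
def eb (e : G.edgeSet) : α := (Quot.out (e : Sym2 α)).2

lemma ea_eb (e : G.edgeSet) : s(ea G e, eb G e) = (e : Sym2 α) := Quot.out_eq _

lemma adj_ea (e : G.edgeSet) : G.Adj (ea G e) (eb G e) :=
  G.mem_edgeSet.mp (by rw [ea_eb]; exact e.2)

variable (o : G.edgeSet → Bool)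

def gtl (e : G.edgeSet) : α := tl (ea G) (eb G) o e
def ghd (e : G.edgeSet) : α := hd (ea G) (eb G) o e

lemma tl_hd_mk (e : G.edgeSet) : s(gtl G o e, ghd G o e) = (e : Sym2 α) := by
  rw [gtl, ghd, tl, hd]
  cases o e
  · simp only [Bool.false_eq_true, if_false]
    rw [Sym2.eq_swap]
    exact ea_eb G e
  · simp only [if_true]
    exact ea_eb G e

lemma tl_hd_cases {u x : α} (h : G.Adj u x) (e : G.edgeSet) (he : (e : Sym2 α) = s(u, x)) :
    (gtl G o e = u ∧ ghd G o e = x) ∨ (gtl G o e = x ∧ ghd G o e = u) := by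
  have h1 : s(gtl G o e, ghd G o e) = s(u, x) := by rw [tl_hd_mk, he]
  replace h1 := (Sym2.mk_eq_mk_iff (p := (_, _)) (q := (_, _))).mp h1
  rcases h1 with h1 | h1
  · left; exact ⟨congrArg Prod.fst h1, congrArg Prod.snd h1⟩
  · right; exact ⟨congrArg Prod.fst h1, congrArg Prod.snd h1⟩

def bit (u x : α) : ZMod 2 :=
  if h : G.Adj u x then (if gtl G o ⟨s(u, x), h⟩ = u then 0 else 1) else 0

lemma bit_eq_zero_iff {u x : α} (h : G.Adj u x) :
    bit G o u x = 0 ↔ gtl G o ⟨s(u, x), h⟩ = u := by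
  rw [bit, dif_pos h]
  split_ifs with h1 <;> simp [h1]

lemma bit_eq_one_iff {u x : α} (h : G.Adj u x) :
    bit G o u x = 1 ↔ ghd G o ⟨s(u, x), h⟩ = u := by
  have hc := tl_hd_cases G o h ⟨s(u, x), h⟩ rfl
  rw [bit, dif_pos h]
  rcases hc with ⟨h1, h2⟩ | ⟨h1, h2⟩
  · rw [if_pos h1]
    constructor
    · intro hh; exact absurd hh (by decide)
    · intro hh; exact absurd (h2 ▸ hh : x = u) h.ne'
  · rw [if_neg (fun hh : gtl G o _ = u => h.ne' ((h1.symm.trans hh)))]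
    simp [h2]

lemma bit_antisym {u x : α} (h : G.Adj u x) : bit G o u x + bit G o x u = 1 := by
  have hee : (⟨s(x, u), h.symm⟩ : G.edgeSet) = ⟨s(u, x), h⟩ := Subtype.ext Sym2.eq_swap
  have hc := tl_hd_cases G o h ⟨s(u, x), h⟩ rfl
  rw [bit, bit, dif_pos h, dif_pos h.symm]
  rw [show (⟨s(x, u), _⟩ : G.edgeSet) = ⟨s(u, x), h⟩ from hee]
  rcases hc with ⟨h1, h2⟩ | ⟨h1, h2⟩
  · rw [if_pos h1, if_neg (fun hh => h.ne (h1.symm.trans hh))]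
    decide
  · rw [if_neg (fun hh => h.ne' (h1.symm.trans hh)), if_pos h1]
    decide

def gcnt (c : ZMod 2) (u : α) : ℕ :=
  (univ.filter fun x => G.Adj u x ∧ bit G o u x = c).card

lemma ghd_of_gtl {u : α} (e : G.edgeSet) (he : gtl G o e = u) :
    G.Adj u (ghd G o e) ∧ (e : Sym2 α) = s(u, ghd G o e) := by
  have h1 := tl_hd_mk G o e
  rw [he] at h1
  have h2 : s(u, ghd G o e) ∈ G.edgeSet := by rw [h1]; exact e.2
  exact ⟨G.mem_edgeSet.mp h2, h1.symm⟩

lemma gtl_of_ghd {u : α} (e : G.edgeSet) (he : ghd G o e = u) :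
    G.Adj u (gtl G o e) ∧ (e : Sym2 α) = s(u, gtl G o e) := by
  have h1 := tl_hd_mk G o e
  rw [he] at h1
  rw [Sym2.eq_swap] at h1
  have h2 : s(u, gtl G o e) ∈ G.edgeSet := by rw [h1]; exact e.2
  exact ⟨G.mem_edgeSet.mp h2, h1.symm⟩

lemma gcnt_zero (u : α) :
    gcnt G o 0 u = (univ.filter fun e : G.edgeSet => gtl G o e = u).card := by
  rw [gcnt]
  refine Finset.card_bij' (fun x hx => ?_) (fun e he => ghd G o e) ?_ ?_ ?_ ?_
  · exact ⟨s(u, x), (Finset.mem_filter.mp hx).2.1⟩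
  · intro x hx
    rw [Finset.mem_filter] at hx ⊢
    exact ⟨Finset.mem_univ _, (bit_eq_zero_iff G o hx.2.1).mp hx.2.2⟩
  · intro e he
    rw [Finset.mem_filter] at he ⊢
    obtain ⟨hadj, hval⟩ := ghd_of_gtl G o e he.2
    refine ⟨Finset.mem_univ _, hadj, ?_⟩
    rw [bit_eq_zero_iff G o hadj]
    rw [show (⟨s(u, ghd G o e), hadj⟩ : G.edgeSet) = e from Subtype.ext hval.symm]
    exact he.2
  · intro x hx
    rw [Finset.mem_filter] at hx
    have h := (bit_eq_zero_iff G o hx.2.1).mp hx.2.2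
    rcases tl_hd_cases G o hx.2.1 ⟨s(u, x), hx.2.1⟩ rfl with ⟨h1, h2⟩ | ⟨h1, h2⟩
    · exact h2
    · exact absurd (h1.symm.trans h) hx.2.1.ne'
  · intro e he
    rw [Finset.mem_filter] at he
    obtain ⟨hadj, hval⟩ := ghd_of_gtl G o e he.2
    exact Subtype.ext hval.symm

lemma gcnt_one (u : α) :
    gcnt G o 1 u = (univ.filter fun e : G.edgeSet => ghd G o e = u).card := by
  rw [gcnt]
  refine Finset.card_bij' (fun x hx => ?_) (fun e he => gtl G o e) ?_ ?_ ?_ ?_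
  · exact ⟨s(u, x), (Finset.mem_filter.mp hx).2.1⟩
  · intro x hx
    rw [Finset.mem_filter] at hx ⊢
    exact ⟨Finset.mem_univ _, (bit_eq_one_iff G o hx.2.1).mp hx.2.2⟩
  · intro e he
    rw [Finset.mem_filter] at he ⊢
    obtain ⟨hadj, hval⟩ := gtl_of_ghd G o e he.2
    refine ⟨Finset.mem_univ _, hadj, ?_⟩
    rw [bit_eq_one_iff G o hadj]
    rw [show (⟨s(u, gtl G o e), hadj⟩ : G.edgeSet) = e from Subtype.ext hval.symm]
    exact he.2
  · intro x hx
    rw [Finset.mem_filter] at hx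
    have h := (bit_eq_one_iff G o hx.2.1).mp hx.2.2
    rcases tl_hd_cases G o hx.2.1 ⟨s(u, x), hx.2.1⟩ rfl with ⟨h1, h2⟩ | ⟨h1, h2⟩
    · exact absurd (h2.symm.trans h) hx.2.1.ne'
    · exact h1
  · intro e he
    rw [Finset.mem_filter] at he
    obtain ⟨hadj, hval⟩ := gtl_of_ghd G o e he.2
    exact Subtype.ext hval.symm

/-- the signed degree -/
def sgn (u : α) : ℤ := (gcnt G o 0 u : ℤ) - (gcnt G o 1 u : ℤ)

lemma sgn_eq_disc (u : α) : sgn G o u = disc (ea G) (eb G) o u := by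
  rw [sgn, disc, Finset.sum_sub_distrib, Finset.sum_boole, Finset.sum_boole,
    gcnt_zero, gcnt_one]
  rfl

lemma sum_sgn : ∑ u, sgn G o u = 0 := by
  have h0 : ∑ u, sgn G o u = ∑ u, disc (ea G) (eb G) o u :=
    Finset.sum_congr rfl (fun u _ => sgn_eq_disc G o u)
  rw [h0]
  simp only [disc]
  rw [Finset.sum_comm]
  have : ∀ k : G.edgeSet, (∑ u : α, ((if tl (ea G) (eb G) o k = u then (1:ℤ) else 0)
      - (if hd (ea G) (eb G) o k = u then 1 else 0))) = 0 := by
    intro k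
    rw [Finset.sum_sub_distrib]
    simp [Finset.sum_ite_eq]
  rw [Finset.sum_congr rfl (fun k _ => this k)]
  simp

lemma abs_sgn_le : ∃ o : G.edgeSet → Bool, ∀ u, |sgn G o u| ≤ 1 := by
  obtain ⟨o, ho⟩ := bal (Fintype.card G.edgeSet) G.edgeSet α (ea G) (eb G) rfl
  exact ⟨o, fun u => (sgn_eq_disc G o u) ▸ ho u⟩

end Graph

/-- counting lemma: a ±1/0-valued function summing to zero has equally many +1s and -1s -/
lemma count_pm {α : Type*} [Fintype α] (f : α → ℤ) (hb : ∀ x, |f x| ≤ 1)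
    (hs : ∑ x, f x = 0) :
    (univ.filter fun x => f x = 1).card = (univ.filter fun x => f x = -1).card := by
  have h1 : ∀ x ∈ (univ : Finset α), f x =
      (if f x = 1 then (1:ℤ) else 0) - (if f x = -1 then 1 else 0) := by
    intro x _
    have := abs_le.mp (hb x)
    have h3 : f x = -1 ∨ f x = 0 ∨ f x = 1 := by omega
    rcases h3 with h|h|h <;> rw [h] <;> norm_num
  rw [Finset.sum_congr rfl h1, Finset.sum_sub_distrib, Finset.sum_boole, Finset.sum_boole] at hs
  have := sub_eq_zero.mp hs
  exact_mod_cast this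

section Tensor

variable {α β : Type*} [Fintype α] [Fintype β] (G : SimpleGraph α) (H : SimpleGraph β)
  (oG : G.edgeSet → Bool) (oH : H.edgeSet → Bool)

lemma zmod2_cases (x : ZMod 2) : x = 0 ∨ x = 1 := by
  have h : ∀ y : ZMod 2, y = 0 ∨ y = 1 := by decide
  exact h x

/-- the labeling of the tensor product -/
def tf (e : (tensorProd G H).edgeSet) : ZMod 2 :=
  bit G oG (ea (tensorProd G H) e).1 (eb (tensorProd G H) e).1
    + bit H oH (ea (tensorProd G H) e).2 (eb (tensorProd G H) e).2

lemma tf_spec {w z : α × β} (h : (tensorProd G H).Adj w z) :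
    tf G H oG oH ⟨s(w, z), h⟩ = bit G oG w.1 z.1 + bit H oH w.2 z.2 := by
  have h1 : s(ea (tensorProd G H) ⟨s(w, z), h⟩, eb (tensorProd G H) ⟨s(w, z), h⟩) = s(w, z) :=
    ea_eb _ _
  replace h1 := (Sym2.mk_eq_mk_iff (p := (_, _)) (q := (_, _))).mp h1
  rcases h1 with h1 | h1
  · have e1 : ea (tensorProd G H) ⟨s(w, z), h⟩ = w := congrArg Prod.fst h1
    have e2 : eb (tensorProd G H) ⟨s(w, z), h⟩ = z := congrArg Prod.snd h1
    rw [tf, e1, e2]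
  · have e1 : ea (tensorProd G H) ⟨s(w, z), h⟩ = z := congrArg Prod.fst h1
    have e2 : eb (tensorProd G H) ⟨s(w, z), h⟩ = w := congrArg Prod.snd h1
    rw [tf, e1, e2]
    have haG : bit G oG w.1 z.1 + bit G oG z.1 w.1 = 1 := bit_antisym G oG h.1
    have haH : bit H oH w.2 z.2 + bit H oH z.2 w.2 = 1 := bit_antisym H oH h.2
    have hg2 : bit G oG z.1 w.1 = 1 - bit G oG w.1 z.1 := by rw [← haG]; ring
    have hh2 : bit H oH z.2 w.2 = 1 - bit H oH w.2 z.2 := by rw [← haH]; ring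
    rw [hg2, hh2]
    generalize bit G oG w.1 z.1 = p
    generalize bit H oH w.2 z.2 = q
    revert p q
    decide

lemma ncard_filter {γ : Type*} [Fintype γ] (p : γ → Prop) [DecidablePred p] :
    Nat.card {x // p x} = (univ.filter p).card := by
  rw [Nat.card_eq_fintype_card, Fintype.card_subtype]

lemma labDeg_eq (i : ZMod 2) (w : α × β) :
    labDeg (tensorProd G H) (tf G H oG oH) i w
      = gcnt G oG 0 w.1 * gcnt H oH i w.2 + gcnt G oG 1 w.1 * gcnt H oH (i + 1) w.2 := by
  have hequiv : {e : (tensorProd G H).edgeSet // tf G H oG oH e = i ∧ w ∈ (e : Sym2 (α × β))}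
      ≃ {z : α × β // (tensorProd G H).Adj w z ∧ bit G oG w.1 z.1 + bit H oH w.2 z.2 = i} := by
    refine ⟨fun e => ⟨Sym2.Mem.other e.2.2, ?_, ?_⟩,
           fun z => ⟨⟨s(w, z.1), (tensorProd G H).mem_edgeSet.mpr z.2.1⟩, ?_, ?_⟩, ?_, ?_⟩
    · have hsp := Sym2.other_spec e.2.2
      refine (tensorProd G H).mem_edgeSet.mp ?_
      rw [hsp]
      exact e.1.2
    · have hsp := Sym2.other_spec e.2.2
      have hadj : (tensorProd G H).Adj w (Sym2.Mem.other e.2.2) := by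
        refine (tensorProd G H).mem_edgeSet.mp ?_
        rw [hsp]
        exact e.1.2
      have he : (⟨s(w, Sym2.Mem.other e.2.2), hadj⟩ : (tensorProd G H).edgeSet) = e.1 :=
        Subtype.ext hsp
      rw [← tf_spec G H oG oH hadj, he]
      exact e.2.1
    · rw [tf_spec G H oG oH z.2.1]
      exact z.2.2
    · exact Sym2.mem_mk_left _ _
    · intro e
      apply Subtype.ext
      apply Subtype.ext
      exact Sym2.other_spec e.2.2
    · intro z
      apply Subtype.ext
      exact Sym2.congr_right.mp (Sym2.other_spec _)
  have h3 : Nat.card {z : α × β //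
        (tensorProd G H).Adj w z ∧ bit G oG w.1 z.1 + bit H oH w.2 z.2 = i}
      = ((univ.filter fun z : α × β =>
        (tensorProd G H).Adj w z ∧ bit G oG w.1 z.1 + bit H oH w.2 z.2 = i)).card :=
    ncard_filter _
  rw [labDeg, Nat.card_congr hequiv, h3]
  have hfe : (univ.filter fun z : α × β =>
        (tensorProd G H).Adj w z ∧ bit G oG w.1 z.1 + bit H oH w.2 z.2 = i)
      = ((univ.filter fun x => G.Adj w.1 x ∧ bit G oG w.1 x = 0)
          ×ˢ (univ.filter fun y => H.Adj w.2 y ∧ bit H oH w.2 y = i))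
        ∪ ((univ.filter fun x => G.Adj w.1 x ∧ bit G oG w.1 x = 1)
          ×ˢ (univ.filter fun y => H.Adj w.2 y ∧ bit H oH w.2 y = i + 1)) := by
    ext z
    simp only [Finset.mem_filter, Finset.mem_union, Finset.mem_product, Finset.mem_univ, true_and]
    constructor
    · rintro ⟨⟨hg, hh⟩, hb⟩
      rcases zmod2_cases (bit G oG w.1 z.1) with h0 | h0
      · left
        refine ⟨⟨hg, h0⟩, hh, ?_⟩
        rw [h0, zero_add] at hb
        exact hb
      · right
        refine ⟨⟨hg, h0⟩, hh, ?_⟩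
        rw [h0] at hb
        rw [← hb]
        rcases zmod2_cases (bit H oH w.2 z.2) with h2 | h2 <;> rw [h2] <;> decide
    · rintro (⟨⟨hg, h0⟩, hh, hb⟩ | ⟨⟨hg, h0⟩, hh, hb⟩)
      · exact ⟨⟨hg, hh⟩, by rw [h0, hb, zero_add]⟩
      · refine ⟨⟨hg, hh⟩, ?_⟩
        rw [h0, hb]
        rcases zmod2_cases i with h2 | h2 <;> rw [h2] <;> decide
  rw [hfe, Finset.card_union_of_disjoint, Finset.card_product, Finset.card_product]
  · rfl
  · rw [Finset.disjoint_left]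
    rintro z hz1 hz2
    rw [Finset.mem_product, Finset.mem_filter] at hz1 hz2
    have c0 := hz1.1.2.2
    have c1 := hz2.1.2.2
    rw [c0] at c1
    exact absurd c1 (by decide)

/-- the twin edge -/
def twin (e : (tensorProd G H).edgeSet) : (tensorProd G H).edgeSet :=
  ⟨s(((ea (tensorProd G H) e).1, (eb (tensorProd G H) e).2),
     ((eb (tensorProd G H) e).1, (ea (tensorProd G H) e).2)),
   (tensorProd G H).mem_edgeSet.mpr ⟨(adj_ea (tensorProd G H) e).1, (adj_ea (tensorProd G H) e).2.symm⟩⟩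

lemma twin_val {w z : α × β} (h : (tensorProd G H).Adj w z) :
    (twin G H ⟨s(w, z), h⟩ : Sym2 (α × β)) = s((w.1, z.2), (z.1, w.2)) := by
  have h1 : s(ea (tensorProd G H) ⟨s(w, z), h⟩, eb (tensorProd G H) ⟨s(w, z), h⟩) = s(w, z) :=
    ea_eb _ _
  replace h1 := (Sym2.mk_eq_mk_iff (p := (_, _)) (q := (_, _))).mp h1
  rcases h1 with h1 | h1
  · have e1 : ea (tensorProd G H) ⟨s(w, z), h⟩ = w := congrArg Prod.fst h1
    have e2 : eb (tensorProd G H) ⟨s(w, z), h⟩ = z := congrArg Prod.snd h1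
    show s(_, _) = _
    rw [e1, e2]
  · have e1 : ea (tensorProd G H) ⟨s(w, z), h⟩ = z := congrArg Prod.fst h1
    have e2 : eb (tensorProd G H) ⟨s(w, z), h⟩ = w := congrArg Prod.snd h1
    show s(_, _) = _
    rw [e1, e2, Sym2.eq_swap]

lemma edge_eta (e : (tensorProd G H).edgeSet) :
    e = ⟨s(ea (tensorProd G H) e, eb (tensorProd G H) e),
      (tensorProd G H).mem_edgeSet.mpr (adj_ea (tensorProd G H) e)⟩ :=
  Subtype.ext (ea_eb _ _).symm

lemma twin_tf (e : (tensorProd G H).edgeSet) :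
    tf G H oG oH (twin G H e) = tf G H oG oH e + 1 := by
  set w := ea (tensorProd G H) e with hwdef
  set z := eb (tensorProd G H) e with hzdef
  have hadj : (tensorProd G H).Adj w z := adj_ea (tensorProd G H) e
  have he : e = ⟨s(w, z), (tensorProd G H).mem_edgeSet.mpr hadj⟩ := edge_eta G H e
  have hadj2 : (tensorProd G H).Adj (w.1, z.2) (z.1, w.2) := ⟨hadj.1, hadj.2.symm⟩
  have htv : twin G H e = ⟨s((w.1, z.2), (z.1, w.2)), (tensorProd G H).mem_edgeSet.mpr hadj2⟩ := by
    apply Subtype.ext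
    rw [he]
    exact twin_val G H _
  rw [htv, tf_spec G H oG oH hadj2]
  conv_rhs => rw [he, tf_spec G H oG oH hadj]
  have haH : bit H oH w.2 z.2 + bit H oH z.2 w.2 = 1 := bit_antisym H oH hadj.2
  have hh2 : bit H oH z.2 w.2 = 1 - bit H oH w.2 z.2 := by rw [← haH]; ring
  rw [hh2]
  generalize bit G oG w.1 z.1 = p
  generalize bit H oH w.2 z.2 = q
  revert p q
  decide

lemma twin_twin (e : (tensorProd G H).edgeSet) : twin G H (twin G H e) = e := by
  set w := ea (tensorProd G H) e with hwdef
  set z := eb (tensorProd G H) e with hzdef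
  have hadj : (tensorProd G H).Adj w z := adj_ea (tensorProd G H) e
  have he : e = ⟨s(w, z), (tensorProd G H).mem_edgeSet.mpr hadj⟩ := edge_eta G H e
  have hadj2 : (tensorProd G H).Adj (w.1, z.2) (z.1, w.2) := ⟨hadj.1, hadj.2.symm⟩
  have htv : twin G H e = ⟨s((w.1, z.2), (z.1, w.2)), (tensorProd G H).mem_edgeSet.mpr hadj2⟩ := by
    apply Subtype.ext
    rw [he]
    exact twin_val G H _
  apply Subtype.ext
  rw [htv, he]
  rw [twin_val G H hadj2]

lemma ec_eq : edgeCount (tensorProd G H) (tf G H oG oH) 0 = edgeCount (tensorProd G H) (tf G H oG oH) 1 := by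
  rw [edgeCount, edgeCount]
  apply Nat.card_congr
  refine ⟨fun e => ⟨twin G H e.1, by rw [twin_tf, e.2]; decide⟩,
          fun e => ⟨twin G H e.1, by rw [twin_tf, e.2]; decide⟩, ?_, ?_⟩
  · intro e; apply Subtype.ext; exact twin_twin G H e.1
  · intro e; apply Subtype.ext; exact twin_twin G H e.1

lemma nat_ineq (a b c d : ℕ) :
    (a * d + b * c < a * c + b * d) ↔ (0:ℤ) < ((a:ℤ) - b) * ((c:ℤ) - d) := by
  rw [show ((a:ℤ) - b) * ((c:ℤ) - d) = ((a:ℤ) * c + (b:ℤ) * d) - ((a:ℤ) * d + (b:ℤ) * c)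
    from by ring, sub_pos]
  exact_mod_cast Iff.rfl

lemma pm_mul_pos (x y : ℤ) (hx : |x| ≤ 1) (hy : |y| ≤ 1) :
    0 < x * y ↔ (x = 1 ∧ y = 1) ∨ (x = -1 ∧ y = -1) := by
  have hx' := abs_le.mp hx
  have hy' := abs_le.mp hy
  have hx3 : x = -1 ∨ x = 0 ∨ x = 1 := by omega
  have hy3 : y = -1 ∨ y = 0 ∨ y = 1 := by omega
  rcases hx3 with h|h|h <;> rcases hy3 with h2|h2|h2 <;> subst h <;> subst h2 <;> norm_num

lemma pm_mul_neg (x y : ℤ) (hx : |x| ≤ 1) (hy : |y| ≤ 1) :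
    x * y < 0 ↔ (x = 1 ∧ y = -1) ∨ (x = -1 ∧ y = 1) := by
  have hx' := abs_le.mp hx
  have hy' := abs_le.mp hy
  have hx3 : x = -1 ∨ x = 0 ∨ x = 1 := by omega
  have hy3 : y = -1 ∨ y = 0 ∨ y = 1 := by omega
  rcases hx3 with h|h|h <;> rcases hy3 with h2|h2|h2 <;> subst h <;> subst h2 <;> norm_num

lemma lab_lt_iff (hoG : ∀ u, |sgn G oG u| ≤ 1) (hoH : ∀ v, |sgn H oH v| ≤ 1) (w : α × β) :
    (labDeg (tensorProd G H) (tf G H oG oH) 1 w < labDeg (tensorProd G H) (tf G H oG oH) 0 w)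
      ↔ ((sgn G oG w.1 = 1 ∧ sgn H oH w.2 = 1) ∨ (sgn G oG w.1 = -1 ∧ sgn H oH w.2 = -1)) := by
  rw [labDeg_eq G H oG oH 1 w, labDeg_eq G H oG oH 0 w,
    show (1 + 1 : ZMod 2) = 0 from by decide, show (0 + 1 : ZMod 2) = 1 from by decide]
  exact (nat_ineq _ _ _ _).trans (pm_mul_pos _ _ (hoG w.1) (hoH w.2))

lemma lab_lt_iff' (hoG : ∀ u, |sgn G oG u| ≤ 1) (hoH : ∀ v, |sgn H oH v| ≤ 1) (w : α × β) :
    (labDeg (tensorProd G H) (tf G H oG oH) 0 w < labDeg (tensorProd G H) (tf G H oG oH) 1 w)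
      ↔ ((sgn G oG w.1 = 1 ∧ sgn H oH w.2 = -1) ∨ (sgn G oG w.1 = -1 ∧ sgn H oH w.2 = 1)) := by
  rw [labDeg_eq G H oG oH 1 w, labDeg_eq G H oG oH 0 w,
    show (1 + 1 : ZMod 2) = 0 from by decide, show (0 + 1 : ZMod 2) = 1 from by decide]
  have h1 : gcnt G oG 0 w.1 * gcnt H oH 0 w.2 + gcnt G oG 1 w.1 * gcnt H oH 1 w.2
      < gcnt G oG 0 w.1 * gcnt H oH 1 w.2 + gcnt G oG 1 w.1 * gcnt H oH 0 w.2
      ↔ (0:ℤ) < ((gcnt G oG 0 w.1 : ℤ) - gcnt G oG 1 w.1)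
          * ((gcnt H oH 1 w.2 : ℤ) - gcnt H oH 0 w.2) := nat_ineq _ _ _ _
  rw [h1, show ((gcnt G oG 0 w.1 : ℤ) - gcnt G oG 1 w.1)
          * ((gcnt H oH 1 w.2 : ℤ) - gcnt H oH 0 w.2)
        = -(sgn G oG w.1 * sgn H oH w.2) from by rw [sgn, sgn]; ring, neg_pos]
  exact pm_mul_neg _ _ (hoG w.1) (hoH w.2)

lemma vc_eq (hoG : ∀ u, |sgn G oG u| ≤ 1) (hoH : ∀ v, |sgn H oH v| ≤ 1) :
    vertexCount (tensorProd G H) (tf G H oG oH) 0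
      = vertexCount (tensorProd G H) (tf G H oG oH) 1 := by
  rw [vertexCount, vertexCount,
    show (1 - 0 : ZMod 2) = 1 from by decide, show (1 - 1 : ZMod 2) = 0 from by decide]
  rw [Nat.card_congr (Equiv.subtypeEquivRight (lab_lt_iff G H oG oH hoG hoH)),
      Nat.card_congr (Equiv.subtypeEquivRight (lab_lt_iff' G H oG oH hoG hoH))]
  rw [ncard_filter, ncard_filter, Finset.filter_or, Finset.filter_or]
  rw [← Finset.univ_product_univ]
  rw [Finset.filter_product (fun u => sgn G oG u = 1) (fun v => sgn H oH v = 1),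
      Finset.filter_product (fun u => sgn G oG u = -1) (fun v => sgn H oH v = -1),
      Finset.filter_product (fun u => sgn G oG u = 1) (fun v => sgn H oH v = -1),
      Finset.filter_product (fun u => sgn G oG u = -1) (fun v => sgn H oH v = 1)]
  have hdisj1 : Disjoint
      ((univ.filter fun u => sgn G oG u = 1) ×ˢ (univ.filter fun v => sgn H oH v = 1))
      ((univ.filter fun u => sgn G oG u = -1) ×ˢ (univ.filter fun v => sgn H oH v = -1)) := by
    rw [Finset.disjoint_left]
    rintro z hz1 hz2
    rw [Finset.mem_product, Finset.mem_filter] at hz1 hz2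
    have c0 := hz1.1.2
    rw [hz2.1.2] at c0
    norm_num at c0
  have hdisj2 : Disjoint
      ((univ.filter fun u => sgn G oG u = 1) ×ˢ (univ.filter fun v => sgn H oH v = -1))
      ((univ.filter fun u => sgn G oG u = -1) ×ˢ (univ.filter fun v => sgn H oH v = 1)) := by
    rw [Finset.disjoint_left]
    rintro z hz1 hz2
    rw [Finset.mem_product, Finset.mem_filter] at hz1 hz2
    have c0 := hz1.1.2
    rw [hz2.1.2] at c0
    norm_num at c0
  rw [Finset.card_union_of_disjoint hdisj1, Finset.card_union_of_disjoint hdisj2,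
    Finset.card_product, Finset.card_product, Finset.card_product, Finset.card_product]
  have hn : (univ.filter fun u => sgn G oG u = 1).card
      = (univ.filter fun u => sgn G oG u = -1).card :=
    count_pm _ hoG (sum_sgn G oG)
  rw [hn]
  ring

lemma exists_adj {γ : Type*} {K : SimpleGraph γ} (h : K.edgeSet.Nonempty) :
    ∃ u v, K.Adj u v := by
  obtain ⟨e, he⟩ := h
  revert he
  induction e using Sym2.ind with
  | _ x y => exact fun he => ⟨x, y, K.mem_edgeSet.mp he⟩

end Tensor

end
end EBaux

theorem tensorProd_stronglyEdgeBalanced {α β : Type*} [Fintype α] [Fintype β]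
    (G : SimpleGraph α) (H : SimpleGraph β)
    (hG : G.edgeSet.Nonempty) (hH : H.edgeSet.Nonempty)
    (hconn : (tensorProd G H).Connected) :
    StronglyEdgeBalanced (tensorProd G H) := by
  classical
  obtain ⟨oG, hoG⟩ := EBaux.abs_sgn_le G
  obtain ⟨oH, hoH⟩ := EBaux.abs_sgn_le H
  refine ⟨EBaux.tf G H oG oH, ⟨?_, ?_⟩, EBaux.vc_eq G H oG oH hoG hoH, EBaux.ec_eq G H oG oH⟩
  · obtain ⟨u1, u2, hg⟩ := EBaux.exists_adj hG
    obtain ⟨v1, v2, hh⟩ := EBaux.exists_adj hH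
    set e0 : (tensorProd G H).edgeSet :=
      ⟨s((u1, v1), (u2, v2)), (tensorProd G H).mem_edgeSet.mpr ⟨hg, hh⟩⟩
    intro c
    have h2 : ∀ p q : ZMod 2, q = p ∨ q = p + 1 := by decide
    rcases h2 (EBaux.tf G H oG oH e0) c with hc | hc
    · exact ⟨e0, hc.symm⟩
    · exact ⟨EBaux.twin G H e0, (EBaux.twin_tf G H oG oH e0).trans hc.symm⟩
  · rw [EBaux.ec_eq G H oG oH]
    simp
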